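/- In the Grassmann algebra G, if h is an n-linear map given by a multilinear polynomial in variables x_1,...,x_{n-1} that is not an identity of G (i.e., there exist substitutions of products of distinct generators making h nonzero), then x_n · h(x_1, ..., x_{n-1}) is not a central polynomial of G: there exist pairwise disjoint products of generators ā_1, ..., ā_n with ā_n · h(ā_1, ..., ā_{n-1}) not in the center of G. -/

import Mathlib

/-- The generators of the infinite-dimensional Grassmann algebra over `F`. -/
noncomputable def grassmannGen (F : Type*) [Field F] (i : ℕ) :
    ExteriorAlgebra F (ℕ →₀ F) :=
  ExteriorAlgebra.ι F (Finsupp.single i 1)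

open CliffordAlgebra

section Aux

variable {F : Type*} [Field F]

section GeneralM
variable {M : Type*} [AddCommGroup M] [Module F M]

/-- In the exterior algebra, `ι v * x = involute x * ι v`. -/
lemma iota_mul_eq (v : M) (x : ExteriorAlgebra F M) :
    ExteriorAlgebra.ι F v * x = involute x * ExteriorAlgebra.ι F v := by
  induction x using CliffordAlgebra.induction with
  | algebraMap r => simp [Algebra.commutes]
  | ι w =>
      rw [CliffordAlgebra.involute_ι, CliffordAlgebra.ι_mul_ι_comm]
      simp [QuadraticMap.polar]
  | mul a b ha hb =>
      rw [← mul_assoc, ha, mul_assoc, hb, ← mul_assoc, map_mul]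
  | add a b ha hb => simp [mul_add, add_mul, ha, hb]

lemma mul_iota_eq (v : M) (x : ExteriorAlgebra F M) :
    x * ExteriorAlgebra.ι F v = ExteriorAlgebra.ι F v * involute x := by
  rw [iota_mul_eq, CliffordAlgebra.involute_involute]

lemma iota_anticomm (v w : M) :
    ExteriorAlgebra.ι F v * ExteriorAlgebra.ι F w
      = -(ExteriorAlgebra.ι F w * ExteriorAlgebra.ι F v) := by
  rw [CliffordAlgebra.ι_mul_ι_comm]
  simp [QuadraticMap.polar]

/-- Twisted Leibniz rule for contraction in the Clifford algebra. -/
lemma contract_mul (Q : QuadraticForm F M) (d : Module.Dual F M)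
    (a b : CliffordAlgebra Q) :
    contractLeft d (a * b) =
      contractLeft (Q := Q) d a * b + involute a * contractLeft (Q := Q) d b := by
  induction a using CliffordAlgebra.induction generalizing b with
  | algebraMap r =>
      simp [CliffordAlgebra.contractLeft_algebraMap, Algebra.smul_def,
        CliffordAlgebra.contractLeft_algebraMap_mul]
  | ι w =>
      rw [CliffordAlgebra.contractLeft_ι_mul, CliffordAlgebra.contractLeft_ι,
        CliffordAlgebra.involute_ι]
      rw [sub_eq_add_neg, neg_mul, Algebra.smul_def]
  | mul a₁ a₂ ha₁ ha₂ =>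
      rw [mul_assoc, ha₁, ha₂, ha₁ a₂, map_mul]
      noncomm_ring
  | add a₁ a₂ ha₁ ha₂ =>
      simp only [add_mul, ha₁, ha₂, map_add]
      abel

end GeneralM

lemma exists_adjoin (x : ExteriorAlgebra F (ℕ →₀ F)) :
    ∃ N : ℕ, x ∈ Algebra.adjoin F (grassmannGen F '' Set.Iio N) := by
  induction x using CliffordAlgebra.induction with
  | algebraMap r => exact ⟨0, Subalgebra.algebraMap_mem _ r⟩
  | ι w =>
      refine ⟨w.support.sup id + 1, ?_⟩
      have hw : w = ∑ i ∈ w.support, (w i) • Finsupp.single i (1 : F) := by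
        conv_lhs => rw [← Finsupp.sum_single w]
        rw [Finsupp.sum]
        congr 1
        ext i
        rw [Finsupp.smul_single, smul_eq_mul, mul_one]
      have h2 : ExteriorAlgebra.ι F w
          = ∑ i ∈ w.support, (w i) • ExteriorAlgebra.ι F (Finsupp.single i (1:F)) := by
        conv_lhs => rw [hw]
        rw [map_sum]
        exact Finset.sum_congr rfl fun i _ => map_smul _ _ _
      rw [h2]
      refine Subalgebra.sum_mem _ fun i hi => ?_
      refine Subalgebra.smul_mem _ (Algebra.subset_adjoin ?_) _
      exact ⟨i, Nat.lt_succ_of_le (Finset.le_sup (f := id) hi), rfl⟩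
  | mul a b ha hb =>
      obtain ⟨Na, ha⟩ := ha
      obtain ⟨Nb, hb⟩ := hb
      refine ⟨max Na Nb, Subalgebra.mul_mem _ ?_ ?_⟩
      · exact Algebra.adjoin_mono
          (Set.image_mono (Set.Iio_subset_Iio (le_max_left _ _))) ha
      · exact Algebra.adjoin_mono
          (Set.image_mono (Set.Iio_subset_Iio (le_max_right _ _))) hb
  | add a b ha hb =>
      obtain ⟨Na, ha⟩ := ha
      obtain ⟨Nb, hb⟩ := hb
      refine ⟨max Na Nb, Subalgebra.add_mem _ ?_ ?_⟩
      · exact Algebra.adjoin_mono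
          (Set.image_mono (Set.Iio_subset_Iio (le_max_left _ _))) ha
      · exact Algebra.adjoin_mono
          (Set.image_mono (Set.Iio_subset_Iio (le_max_right _ _))) hb

lemma involute_mem {N : ℕ} {x : ExteriorAlgebra F (ℕ →₀ F)}
    (hx : x ∈ Algebra.adjoin F (grassmannGen F '' Set.Iio N)) :
    involute x ∈ Algebra.adjoin F (grassmannGen F '' Set.Iio N) := by
  induction hx using Algebra.adjoin_induction with
  | mem y hy =>
      obtain ⟨i, hi, rfl⟩ := hy
      rw [show grassmannGen F i = ExteriorAlgebra.ι F (Finsupp.single i 1) from rfl,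
        CliffordAlgebra.involute_ι]
      exact Subalgebra.neg_mem _ (Algebra.subset_adjoin ⟨i, hi, rfl⟩)
  | algebraMap r => simpa using Subalgebra.algebraMap_mem _ r
  | add a b _ _ pa pb => rw [map_add]; exact add_mem pa pb
  | mul a b _ _ pa pb => rw [map_mul]; exact mul_mem pa pb

lemma contract_vanish {N k : ℕ} (hk : N ≤ k) {x : ExteriorAlgebra F (ℕ →₀ F)}
    (hx : x ∈ Algebra.adjoin F (grassmannGen F '' Set.Iio N)) :
    contractLeft (Q := (0 : QuadraticForm F (ℕ →₀ F)))
      (Finsupp.lapply k : (ℕ →₀ F) →ₗ[F] F) x = 0 := by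
  induction hx using Algebra.adjoin_induction with
  | mem y hy =>
      obtain ⟨i, hi, rfl⟩ := hy
      rw [show grassmannGen F i = ExteriorAlgebra.ι F (Finsupp.single i 1) from rfl,
        CliffordAlgebra.contractLeft_ι]
      have hz : (Finsupp.single i (1:F)) k = 0 := by
        have hi' : i < N := hi
        rw [Finsupp.single_apply, if_neg]
        omega
      simp [Finsupp.lapply, hz]
  | algebraMap r =>
      exact CliffordAlgebra.contractLeft_algebraMap
        (Q := (0 : QuadraticForm F (ℕ →₀ F))) (Finsupp.lapply k) r
  | add a b _ _ pa pb => rw [map_add, pa, pb, add_zero]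
  | mul a b _ _ pa pb => rw [contract_mul, pa, pb, zero_mul, mul_zero, add_zero]

/-- Multiplying a nonzero element of a "bounded" subalgebra by a fresh generator
on the left is injective. -/
lemma key_cancel {N k : ℕ} (hk : N ≤ k) {x : ExteriorAlgebra F (ℕ →₀ F)}
    (hx : x ∈ Algebra.adjoin F (grassmannGen F '' Set.Iio N))
    (hzero : ExteriorAlgebra.ι F (Finsupp.single k (1:F)) * x = 0) : x = 0 := by
  have hc := congrArg
    (contractLeft (Q := (0 : QuadraticForm F (ℕ →₀ F)))
      (Finsupp.lapply k : (ℕ →₀ F) →ₗ[F] F)) hzero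
  rw [map_zero, CliffordAlgebra.contractLeft_ι_mul, contract_vanish hk hx,
    mul_zero, sub_zero] at hc
  simpa [Finsupp.lapply, Finsupp.single_eq_same] using hc

end Aux

set_option maxHeartbeats 1000000 in
/-- If a multilinear map `h` (given by a multilinear polynomial in `m`
variables) does not vanish on some disjoint substitution of products of
distinct generators, then `x_{m+1} · h(x_1,…,x_m)` is not central: there is a
disjoint substitution `ā` with `ā_{m+1} · h(ā_1,…,ā_m)` not in the center. -/
theorem nonidentity_times_variable_not_central
    (F : Type*) [Field F] [CharZero F] (m : ℕ)
    (h : MultilinearMap F (fun _ : Fin m => ExteriorAlgebra F (ℕ →₀ F))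
      (ExteriorAlgebra F (ℕ →₀ F)))
    (hid : ∃ l : Fin m → List ℕ, (∀ i, (l i).Nodup) ∧
      (∀ i j, i ≠ j → (l i).Disjoint (l j)) ∧
      h (fun i => ((l i).map (grassmannGen F)).prod) ≠ 0) :
    ∃ l : Fin (m + 1) → List ℕ, (∀ i, (l i).Nodup) ∧
      (∀ i j, i ≠ j → (l i).Disjoint (l j)) ∧
      ((l (Fin.last m)).map (grassmannGen F)).prod *
          h (fun i => ((l i.castSucc).map (grassmannGen F)).prod) ∉
        Subalgebra.center F (ExteriorAlgebra F (ℕ →₀ F)) := by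
  classical
  obtain ⟨l, hnd, hdisj, hne⟩ := hid
  set g := h (fun i => ((l i).map (grassmannGen F)).prod) with hgdef
  obtain ⟨N₀, hgN⟩ := exists_adjoin g
  set B : ℕ := Finset.univ.sup (fun i : Fin m => (l i).toFinset.sup id) with hB
  have hbound : ∀ i a, a ∈ l i → a ≤ B := by
    intro i a ha
    have h1 : id a ≤ (l i).toFinset.sup id :=
      Finset.le_sup (f := id) (List.mem_toFinset.mpr ha)
    have h2 := Finset.le_sup (f := fun i : Fin m => (l i).toFinset.sup id)
      (Finset.mem_univ i)
    simp only [id] at h1 h2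
    omega
  set K : ℕ := max N₀ (B + 1) with hK
  have hKN : N₀ ≤ K := le_max_left _ _
  have hKB : B < K := lt_of_lt_of_le (Nat.lt_succ_self B) (le_max_right _ _)
  have hKnot : ∀ i, K ∉ l i := fun i hmem => absurd (hbound i K hmem) (by omega)
  have hK1not : ∀ i, K + 1 ∉ l i := fun i hmem => absurd (hbound i (K+1) hmem) (by omega)
  have harg : ∀ L : List ℕ, (fun i : Fin m =>
      ((Fin.snoc (α := fun _ : Fin (m+1) => List ℕ) l L (Fin.castSucc i)).map (grassmannGen F)).prod)
      = fun i : Fin m => ((l i).map (grassmannGen F)).prod := by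
    intro L
    funext i
    rw [Fin.snoc_castSucc]
  by_cases hinv : involute g = g
  · -- even case: append a fresh generator
    refine ⟨Fin.snoc l [K], ?_, ?_, ?_⟩
    · intro i
      rcases Fin.eq_castSucc_or_eq_last i with ⟨a, rfl⟩ | rfl
      · rw [Fin.snoc_castSucc]; exact hnd a
      · rw [Fin.snoc_last]; simp
    · intro i j hij
      rcases Fin.eq_castSucc_or_eq_last i with ⟨a, rfl⟩ | rfl <;>
        rcases Fin.eq_castSucc_or_eq_last j with ⟨b, rfl⟩ | rfl
      · rw [Fin.snoc_castSucc, Fin.snoc_castSucc]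
        exact hdisj a b (fun hab => hij (by rw [hab]))
      · rw [Fin.snoc_castSucc, Fin.snoc_last]
        intro x hx hx'
        rw [List.mem_singleton] at hx'
        exact hKnot a (hx' ▸ hx)
      · rw [Fin.snoc_castSucc, Fin.snoc_last]
        intro x hx hx'
        rw [List.mem_singleton] at hx
        exact hKnot b (hx ▸ hx')
      · exact absurd rfl hij
    · rw [Fin.snoc_last, harg, ← hgdef]
      have hprod : (([K] : List ℕ).map (grassmannGen F)).prod = grassmannGen F K := by
        simp
      rw [hprod]
      intro hc
      rw [Subalgebra.mem_center_iff] at hc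
      have h1 := hc (grassmannGen F (K + 1))
      -- rewrite RHS
      have h2 : grassmannGen F K * g * grassmannGen F (K + 1)
          = -(grassmannGen F (K + 1) * (grassmannGen F K * g)) := by
        rw [mul_assoc, show (grassmannGen F (K+1)) = ExteriorAlgebra.ι F (Finsupp.single (K+1) 1) from rfl,
          mul_iota_eq, hinv]
        rw [show (grassmannGen F K) = ExteriorAlgebra.ι F (Finsupp.single K 1) from rfl,
          ← mul_assoc, iota_anticomm]
        rw [neg_mul, mul_assoc]
      rw [h2] at h1
      have h3 : (2 : F) • (grassmannGen F (K + 1) * (grassmannGen F K * g)) = 0 := by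
        rw [two_smul]
        nth_rewrite 1 [h1]
        exact neg_add_cancel _
      have h4 : grassmannGen F (K + 1) * (grassmannGen F K * g) = 0 :=
        (smul_eq_zero.mp h3).resolve_left two_ne_zero
      have hmem1 : grassmannGen F K * g
          ∈ Algebra.adjoin F (grassmannGen F '' Set.Iio (K + 1)) := by
        refine Subalgebra.mul_mem _ (Algebra.subset_adjoin ⟨K, Nat.lt_succ_self K, rfl⟩) ?_
        exact Algebra.adjoin_mono
          (Set.image_mono (Set.Iio_subset_Iio (by omega))) hgN
      have h5 : grassmannGen F K * g = 0 := key_cancel le_rfl hmem1 h4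
      have h6 : g = 0 := key_cancel hKN hgN h5
      exact hne h6
  · -- odd case: append the empty product
    refine ⟨Fin.snoc l [], ?_, ?_, ?_⟩
    · intro i
      rcases Fin.eq_castSucc_or_eq_last i with ⟨a, rfl⟩ | rfl
      · rw [Fin.snoc_castSucc]; exact hnd a
      · rw [Fin.snoc_last]; simp
    · intro i j hij
      rcases Fin.eq_castSucc_or_eq_last i with ⟨a, rfl⟩ | rfl <;>
        rcases Fin.eq_castSucc_or_eq_last j with ⟨b, rfl⟩ | rfl
      · rw [Fin.snoc_castSucc, Fin.snoc_castSucc]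
        exact hdisj a b (fun hab => hij (by rw [hab]))
      · rw [Fin.snoc_castSucc, Fin.snoc_last]
        intro x hx hx'
        exact absurd hx' List.not_mem_nil
      · rw [Fin.snoc_castSucc, Fin.snoc_last]
        intro x hx hx'
        exact absurd hx List.not_mem_nil
      · exact absurd rfl hij
    · rw [Fin.snoc_last, harg, ← hgdef]
      simp only [List.map_nil, List.prod_nil, one_mul]
      intro hc
      rw [Subalgebra.mem_center_iff] at hc
      have h1 := hc (grassmannGen F K)
      rw [show (grassmannGen F K) = ExteriorAlgebra.ι F (Finsupp.single K 1) from rfl,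
        mul_iota_eq] at h1
      -- h1 : ι e_K * g = ι e_K * involute g
      have h2 : ExteriorAlgebra.ι F (Finsupp.single K (1:F)) * (g - involute g) = 0 := by
        rw [mul_sub, h1, sub_self]
      have hmem : g - involute g ∈ Algebra.adjoin F (grassmannGen F '' Set.Iio N₀) :=
        sub_mem hgN (involute_mem hgN)
      have h3 : g - involute g = 0 := key_cancel hKN hmem h2
      exact hinv (by linear_combination (norm := abel) -h3)
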